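/- Let K be a real number field of degree k and B = (b_1,...,b_k) an integral basis of K. The map a ↦ transpose of the matrix of multiplication-by-a in the basis B is an injective group homomorphism from the group U_K^+ = {a ∈ O_K^× : a > 0, N_{K/ℚ}(a) = 1} into SL_k(ℤ), whose image is contained in G_v for v = (b_1,...,b_k) ∈ ℝ^k. -/

import Mathlib

/-- Let `K ⊂ ℝ` be a number field of degree `k` with integral basis `b`. The map
`a ↦ (matrix of multiplication by a in basis b)ᵀ` is an injective group homomorphism
from `U_K^+ = {a ∈ O_K^× : a > 0, N(a) = 1}` into `SL_k(ℤ)` whose image lies in `G_v`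
for `v = (b_1, ..., b_k) ∈ ℝ^k`. -/
theorem stmt_11 (k : ℕ) (K : IntermediateField ℚ ℝ)
    [FiniteDimensional ℚ K] (hk : Module.finrank ℚ K = k)
    (b : Module.Basis (Fin k) ℚ K)
    (hint : ∀ i, IsIntegral ℤ (b i))
    (hspan : ∀ x : K, IsIntegral ℤ x → x ∈ Submodule.span ℤ (Set.range b))
    (a a' : K)
    (ha : IsIntegral ℤ a ∧ (∃ c : K, IsIntegral ℤ c ∧ a * c = 1) ∧ 0 < (a : ℝ) ∧
      Algebra.norm ℚ a = 1)
    (ha' : IsIntegral ℤ a' ∧ (∃ c : K, IsIntegral ℤ c ∧ a' * c = 1) ∧ 0 < (a' : ℝ) ∧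
      Algebra.norm ℚ a' = 1) :
    -- the image is an integer matrix of determinant one ...
    (∃ N : Matrix (Fin k) (Fin k) ℤ, N.det = 1 ∧
        (LinearMap.toMatrix b b (Algebra.lmul ℚ K a)).transpose = N.map (Int.cast : ℤ → ℚ)) ∧
      -- ... the map is multiplicative ...
      (LinearMap.toMatrix b b (Algebra.lmul ℚ K (a * a'))).transpose =
        (LinearMap.toMatrix b b (Algebra.lmul ℚ K a)).transpose *
          (LinearMap.toMatrix b b (Algebra.lmul ℚ K a')).transpose ∧
      -- ... injective ...
      ((LinearMap.toMatrix b b (Algebra.lmul ℚ K a)).transpose =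
          (LinearMap.toMatrix b b (Algebra.lmul ℚ K a')).transpose → a = a') ∧
      -- ... and its image lies in `G_v` for `v = (b_1, ..., b_k)`.
      ∃ l : ℝ, 0 < l ∧
        ((LinearMap.toMatrix b b (Algebra.lmul ℚ K a)).transpose.map
            (Rat.cast : ℚ → ℝ)).mulVec (fun i => (b i : ℝ)) =
          l • fun i => (b i : ℝ) := by
  obtain ⟨hai, _, hapos, hanorm⟩ := ha
  have hM : ∀ i j, ∃ n : ℤ, (n : ℚ) = LinearMap.toMatrix b b (Algebra.lmul ℚ K a) i j := by
    intro i j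
    have hx : a * b j ∈ Submodule.span ℤ (Set.range b) :=
      hspan _ ((hai).mul (hint j))
    obtain ⟨n, hn⟩ := (b.mem_span_iff_repr_mem ℤ _).mp hx i
    exact ⟨n, by rw [← Algebra.leftMulMatrix_apply, Algebra.leftMulMatrix_eq_repr_mul, ← hn]; rfl⟩
  choose N hN using hM
  refine ⟨⟨(Matrix.of N).transpose, ?_, ?_⟩, ?_, ?_, ?_⟩
  · have hdet : ((Matrix.of N).det : ℚ) = (LinearMap.toMatrix b b (Algebra.lmul ℚ K a)).det := by
      rw [show ((Matrix.of N).det : ℚ) = (Int.castRingHom ℚ) (Matrix.of N).det from rfl,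
        RingHom.map_det]
      congr 1
      ext i j
      exact hN i j
    rw [Matrix.det_transpose]
    have : ((Matrix.of N).det : ℚ) = 1 := by
      rw [hdet, ← Algebra.leftMulMatrix_apply, ← Algebra.norm_eq_matrix_det b, hanorm]
    exact_mod_cast this
  · ext i j
    simp only [Matrix.transpose_apply, Matrix.map_apply, Matrix.of_apply]
    exact (hN j i).symm
  · have h : LinearMap.toMatrix b b (Algebra.lmul ℚ K (a * a')) =
        LinearMap.toMatrix b b (Algebra.lmul ℚ K a') * LinearMap.toMatrix b b (Algebra.lmul ℚ K a) := by
      rw [mul_comm a a']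
      simpa only [Algebra.leftMulMatrix_apply] using map_mul (Algebra.leftMulMatrix b) a' a
    rw [h, Matrix.transpose_mul]
  · intro h
    have := congrArg Matrix.transpose h
    simp only [Matrix.transpose_transpose] at this
    have h2 : Algebra.leftMulMatrix b a = Algebra.leftMulMatrix b a' := by
      simpa only [Algebra.leftMulMatrix_apply] using this
    exact Algebra.leftMulMatrix_injective b h2
  · refine ⟨(a : ℝ), hapos, ?_⟩
    funext i
    have hrepr : a * b i = ∑ j, LinearMap.toMatrix b b (Algebra.lmul ℚ K a) j i • b j := by
      rw [← Algebra.leftMulMatrix_apply]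
      conv_lhs => rw [← b.sum_repr (a * b i)]
      refine Finset.sum_congr rfl fun j _ => ?_
      rw [Algebra.leftMulMatrix_eq_repr_mul]
    have := congrArg (fun x : K => (x : ℝ)) hrepr
    push_cast at this
    simp only [Rat.smul_def] at this
    simp only [Matrix.mulVec, dotProduct, Matrix.map_apply, Matrix.transpose_apply,
      Pi.smul_apply, smul_eq_mul]
    rw [← this]
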